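/- Let P(λ) = λ²M + λC + K be an n×n complex quadratic matrix polynomial and ε > 0, with weights w_m, w_c, w_k ≥ 0. A complex number λ belongs to the ε-pseudospectrum (i.e., there exist ΔM, ΔC, ΔK ∈ ℂ^{n×n} with ‖[ΔM ΔC ΔK]‖₂ ≤ ε such that det(P(λ) + w_m λ² ΔM + w_c λ ΔC + w_k ΔK) = 0) if and only if σ_min(P(λ)) ≤ ε · p_w(|λ|), where p_w(z) = √(w_m² z⁴ + w_c² z² + w_k²). -/

import Mathlib

open Matrix Complex

/-- Euclidean norm of a complex vector. -/
noncomputable def vnorm {ι : Type*} [Fintype ι] (v : ι → ℂ) : ℝ :=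
  Real.sqrt (∑ i, ‖v i‖ ^ 2)

/-- Smallest singular value of a (possibly rectangular) complex matrix:
the infimum of `‖A v‖` over unit vectors `v`. -/
noncomputable def sigmaMin {ι κ : Type*} [Fintype ι] [Fintype κ]
    (A : Matrix ι κ ℂ) : ℝ :=
  sInf {t : ℝ | ∃ v : κ → ℂ, vnorm v = 1 ∧ t = vnorm (A.mulVec v)}

/-- Spectral (operator 2-) norm of a complex matrix. -/
noncomputable def specNorm {ι κ : Type*} [Fintype ι] [Fintype κ]
    (A : Matrix ι κ ℂ) : ℝ :=
  sSup {t : ℝ | ∃ v : κ → ℂ, vnorm v = 1 ∧ t = vnorm (A.mulVec v)}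

/-- The weight/scaling function `p_w(z) = √(w_m² z⁴ + w_c² z² + w_k²)`. -/
noncomputable def pw (wm wc wk z : ℝ) : ℝ :=
  Real.sqrt (wm ^ 2 * z ^ 4 + wc ^ 2 * z ^ 2 + wk ^ 2)

/-- The quadratic matrix polynomial `P(z) = z² M + z C + K`. -/
noncomputable def Ppoly {n : ℕ} (M C K : Matrix (Fin n) (Fin n) ℂ) (z : ℂ) :
    Matrix (Fin n) (Fin n) ℂ :=
  z ^ 2 • M + z • C + K

/-- The column span (range) of a matrix, viewed as a subspace of `ℂⁿ`. -/
noncomputable def colSpan {n r : ℕ} (A : Matrix (Fin n) (Fin r) ℂ) : Submodule ℂ (Fin n → ℂ) :=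
  Submodule.span ℂ (Set.range fun j => fun i => A i j)

/-- The ε-pseudospectrum of the quadratic matrix polynomial `P(λ)=λ²M+λC+K`
(singular value characterization). -/
noncomputable def Lam {n : ℕ} (M C K : Matrix (Fin n) (Fin n) ℂ)
    (ε wm wc wk : ℝ) : Set ℂ :=
  {z : ℂ | sigmaMin (Ppoly M C K z) ≤ ε * pw wm wc wk ‖z‖}

/-- The restricted ε-pseudospectrum determined by the basis matrix `Vm`. -/
noncomputable def LamRes {n r : ℕ} (M C K : Matrix (Fin n) (Fin n) ℂ)
    (Vm : Matrix (Fin n) (Fin r) ℂ) (ε wm wc wk : ℝ) : Set ℂ :=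
  {z : ℂ | sigmaMin (Ppoly M C K z * Vm) ≤ ε * pw wm wc wk ‖z‖}

section Helpers

variable {ι κ : Type*} [Fintype ι] [Fintype κ]

lemma vnorm_eq_norm (v : κ → ℂ) : vnorm v = ‖(WithLp.equiv 2 (κ → ℂ)).symm v‖ := by
  rw [EuclideanSpace.norm_eq]; simp [vnorm]

lemma vnorm_nonneg (v : κ → ℂ) : 0 ≤ vnorm v := Real.sqrt_nonneg _

lemma vnorm_eq_zero {v : κ → ℂ} (h : vnorm v = 0) : v = 0 := by
  rw [vnorm_eq_norm, norm_eq_zero] at h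
  exact congrArg (WithLp.equiv 2 (κ → ℂ)) h

lemma vnorm_smul (c : ℂ) (v : κ → ℂ) : vnorm (c • v) = ‖c‖ * vnorm v := by
  rw [vnorm_eq_norm, vnorm_eq_norm, ← norm_smul]; congr 1

lemma vnorm_zero : vnorm (0 : κ → ℂ) = 0 := by simp [vnorm]

lemma vnorm_neg (v : κ → ℂ) : vnorm (-v) = vnorm v := by simp [vnorm]

lemma set_eq_image (A : Matrix ι κ ℂ) :
    {t : ℝ | ∃ v : κ → ℂ, vnorm v = 1 ∧ t = vnorm (A.mulVec v)} =
      (fun x : EuclideanSpace ℂ κ => vnorm (A.mulVec (WithLp.equiv 2 (κ → ℂ) x))) ''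
        Metric.sphere 0 1 := by
  ext t
  constructor
  · rintro ⟨v, hv, rfl⟩
    exact ⟨(WithLp.equiv 2 (κ → ℂ)).symm v, by
      rw [mem_sphere_zero_iff_norm, ← vnorm_eq_norm]; exact hv, rfl⟩
  · rintro ⟨x, hx, rfl⟩
    exact ⟨WithLp.equiv 2 (κ → ℂ) x, by
      rw [mem_sphere_zero_iff_norm] at hx
      rw [vnorm_eq_norm]; simpa using hx, rfl⟩

lemma cont_map (A : Matrix ι κ ℂ) :
    Continuous (fun x : EuclideanSpace ℂ κ => vnorm (A.mulVec (WithLp.equiv 2 (κ → ℂ) x))) := by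
  have h1 : Continuous (fun v : κ → ℂ => vnorm (A.mulVec v)) := by
    apply Real.continuous_sqrt.comp
    apply continuous_finset_sum
    intro i _
    apply Continuous.pow
    apply continuous_norm.comp
    simp only [Matrix.mulVec, dotProduct]
    exact continuous_finset_sum _ fun j _ => continuous_const.mul (continuous_apply j)
  exact h1.comp (PiLp.continuous_ofLp 2 (fun _ : κ => ℂ))

lemma isCompact_set (A : Matrix ι κ ℂ) :
    IsCompact {t : ℝ | ∃ v : κ → ℂ, vnorm v = 1 ∧ t = vnorm (A.mulVec v)} := by
  rw [set_eq_image]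
  exact (isCompact_sphere (0 : EuclideanSpace ℂ κ) 1).image (cont_map A)

lemma set_nonempty [Nonempty κ] (A : Matrix ι κ ℂ) :
    {t : ℝ | ∃ v : κ → ℂ, vnorm v = 1 ∧ t = vnorm (A.mulVec v)}.Nonempty := by
  obtain ⟨j0⟩ := ‹Nonempty κ›
  classical
  refine ⟨_, (fun j => if j = j0 then (1:ℂ) else 0), ?_, rfl⟩
  unfold vnorm
  rw [Finset.sum_eq_single j0]
  · simp
  · intro b _ hb; simp [hb]
  · simp

lemma sigmaMin_exists [Nonempty κ] (A : Matrix ι κ ℂ) :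
    ∃ v : κ → ℂ, vnorm v = 1 ∧ vnorm (A.mulVec v) = sigmaMin A := by
  obtain ⟨v, hv, ht⟩ := (isCompact_set A).sInf_mem (set_nonempty A)
  exact ⟨v, hv, ht.symm⟩

lemma sigmaMin_le (A : Matrix ι κ ℂ) {v : κ → ℂ} (hv : vnorm v = 1) :
    sigmaMin A ≤ vnorm (A.mulVec v) :=
  csInf_le ⟨0, fun _ ⟨_, _, ht⟩ => ht ▸ vnorm_nonneg _⟩ ⟨v, hv, rfl⟩

lemma specNorm_le (A : Matrix ι κ ℂ) {b : ℝ} (hb : 0 ≤ b)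
    (h : ∀ v : κ → ℂ, vnorm v = 1 → vnorm (A.mulVec v) ≤ b) : specNorm A ≤ b :=
  Real.sSup_le (by rintro t ⟨v, hv, rfl⟩; exact h v hv) hb

lemma le_specNorm (A : Matrix ι κ ℂ) (v : κ → ℂ) :
    vnorm (A.mulVec v) ≤ specNorm A * vnorm v := by
  rcases eq_or_ne v 0 with rfl | hv
  · simp [Matrix.mulVec_zero, vnorm_zero]
  · have hc : 0 < vnorm v := lt_of_le_of_ne (vnorm_nonneg v) fun h => hv (vnorm_eq_zero h.symm)
    set c : ℝ := vnorm v
    have hu : vnorm (((c : ℂ)⁻¹) • v) = 1 := by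
      rw [vnorm_smul, norm_inv]
      simp only [Complex.norm_real, Real.norm_eq_abs, abs_of_pos hc]
      field_simp
      rfl
    have hmem : vnorm (A.mulVec (((c : ℂ)⁻¹) • v)) ∈
        {t : ℝ | ∃ w : κ → ℂ, vnorm w = 1 ∧ t = vnorm (A.mulVec w)} := ⟨_, hu, rfl⟩
    have hle : vnorm (A.mulVec (((c : ℂ)⁻¹) • v)) ≤ specNorm A :=
      le_csSup (isCompact_set A).bddAbove hmem
    rw [Matrix.mulVec_smul, vnorm_smul, norm_inv] at hle
    simp only [Complex.norm_real, Real.norm_eq_abs, abs_of_pos hc] at hle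
    calc vnorm (A.mulVec v) = c * (c⁻¹ * vnorm (A.mulVec v)) := by field_simp
    _ ≤ c * specNorm A := mul_le_mul_of_nonneg_left hle hc.le
    _ = specNorm A * c := mul_comm _ _

lemma abs_dotProduct_le (a w : κ → ℂ) :
    ‖star a ⬝ᵥ w‖ ≤ vnorm a * vnorm w := by
  have h := norm_inner_le_norm (𝕜 := ℂ) ((WithLp.equiv 2 (κ → ℂ)).symm a)
    ((WithLp.equiv 2 (κ → ℂ)).symm w)
  rw [← vnorm_eq_norm, ← vnorm_eq_norm] at h
  have he : (inner ℂ ((WithLp.equiv 2 (κ → ℂ)).symm a) ((WithLp.equiv 2 (κ → ℂ)).symm w) : ℂ)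
      = star a ⬝ᵥ w := by
    simp [PiLp.inner_apply, RCLike.inner_apply, dotProduct, mul_comm]
  rwa [he] at h

lemma vecMulVec_mulVec' (u : ι → ℂ) (a w : κ → ℂ) :
    (Matrix.vecMulVec u a).mulVec w = (a ⬝ᵥ w) • u := by
  ext i
  simp only [Matrix.vecMulVec, Matrix.mulVec, dotProduct, Matrix.of_apply,
    Pi.smul_apply, smul_eq_mul, Finset.sum_mul]
  exact Finset.sum_congr rfl fun j _ => by ring

lemma sum_abs_sq_eq_one {v : κ → ℂ} (hv : vnorm v = 1) :
    ∑ i, ‖v i‖ ^ 2 = 1 := Real.sqrt_eq_one.mp hv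

lemma vnorm_elim_smul {v : ι → ℂ} (hv : vnorm v = 1) (c1 c2 c3 : ℂ) :
    vnorm (Sum.elim (c1 • v) (Sum.elim (c2 • v) (c3 • v)) : ι ⊕ (ι ⊕ ι) → ℂ)
      = Real.sqrt (‖c1‖ ^ 2 + ‖c2‖ ^ 2 + ‖c3‖ ^ 2) := by
  have h1 := sum_abs_sq_eq_one hv
  unfold vnorm
  rw [Fintype.sum_sum_type, Fintype.sum_sum_type]
  simp only [Sum.elim_inl, Sum.elim_inr, Pi.smul_apply, smul_eq_mul, norm_mul, mul_pow,
    ← Finset.mul_sum, h1, mul_one]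
  rw [← add_assoc]

end Helpers

lemma vnorm_normalize {κ : Type*} [Fintype κ] {v : κ → ℂ} (hv : v ≠ 0) :
    vnorm (((vnorm v : ℝ) : ℂ)⁻¹ • v) = 1 := by
  have hc : 0 < vnorm v := lt_of_le_of_ne (vnorm_nonneg v) fun h => hv (vnorm_eq_zero h.symm)
  rw [vnorm_smul, norm_inv]
  simp only [Complex.norm_real, Real.norm_eq_abs, abs_of_pos hc]
  field_simp

/-- `λ` belongs to the ε-pseudospectrum of `P(λ)=λ²M+λC+K` (perturbation
definition, with block perturbation `[ΔM ΔC ΔK]` of spectral norm at most ε) if and only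
if `σ_min(P(λ)) ≤ ε p_w(|λ|)`. -/
theorem pseudospectrum_characterization
    {n : ℕ} (hn : 0 < n) (M C K : Matrix (Fin n) (Fin n) ℂ)
    (ε wm wc wk : ℝ) (hε : 0 < ε) (hwm : 0 ≤ wm) (hwc : 0 ≤ wc) (hwk : 0 ≤ wk)
    (lam : ℂ) :
    (∃ ΔM ΔC ΔK : Matrix (Fin n) (Fin n) ℂ,
        specNorm (Matrix.fromCols ΔM (Matrix.fromCols ΔC ΔK)) ≤ ε ∧
        (Ppoly M C K lam + ((wm : ℂ) * lam ^ 2) • ΔM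
            + ((wc : ℂ) * lam) • ΔC + (wk : ℂ) • ΔK).det = 0) ↔
      sigmaMin (Ppoly M C K lam) ≤ ε * pw wm wc wk (‖lam‖) := by
  haveI : Nonempty (Fin n) := Fin.pos_iff_nonempty.mp hn
  have hpp0 : (0:ℝ) ≤ wm ^ 2 * ‖lam‖ ^ 4 + wc ^ 2 * ‖lam‖ ^ 2 + wk ^ 2 := by
    positivity
  have hpw_eq : pw wm wc wk ‖lam‖
      = Real.sqrt (wm ^ 2 * ‖lam‖ ^ 4 + wc ^ 2 * ‖lam‖ ^ 2 + wk ^ 2) := rfl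
  constructor
  · -- perturbation ⟹ singular value bound
    rintro ⟨DM, DC, DK, hB, hdet⟩
    obtain ⟨v, hv0, hQv⟩ := Matrix.exists_mulVec_eq_zero_iff.mpr hdet
    set u : Fin n → ℂ := ((vnorm v : ℝ) : ℂ)⁻¹ • v with hu_def
    have hu : vnorm u = 1 := vnorm_normalize hv0
    have hQu : (Ppoly M C K lam + ((wm : ℂ) * lam ^ 2) • DM
        + ((wc : ℂ) * lam) • DC + (wk : ℂ) • DK) *ᵥ u = 0 := by
      rw [hu_def, Matrix.mulVec_smul, hQv, smul_zero]
    clear_value u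
    simp only [Matrix.add_mulVec, Matrix.smul_mulVec] at hQu
    rw [add_assoc, add_assoc] at hQu
    have h1 : Ppoly M C K lam *ᵥ u
        = -(((wm:ℂ)*lam^2) • (DM *ᵥ u) + (((wc:ℂ)*lam) • (DC *ᵥ u) + (wk:ℂ) • (DK *ᵥ u))) :=
      eq_neg_of_add_eq_zero_left hQu
    set w : (Fin n) ⊕ ((Fin n) ⊕ (Fin n)) → ℂ :=
      Sum.elim (((wm:ℂ)*lam^2) • u) (Sum.elim (((wc:ℂ)*lam) • u) ((wk:ℂ) • u)) with hw_def
    have hBw : (Matrix.fromCols DM (Matrix.fromCols DC DK)) *ᵥ w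
        = ((wm:ℂ)*lam^2) • (DM *ᵥ u) + (((wc:ℂ)*lam) • (DC *ᵥ u) + (wk:ℂ) • (DK *ᵥ u)) := by
      rw [hw_def, Matrix.fromCols_mulVec_sumElim, Matrix.fromCols_mulVec_sumElim,
        Matrix.mulVec_smul, Matrix.mulVec_smul, Matrix.mulVec_smul]
    have hwnorm : vnorm w = pw wm wc wk (‖lam‖) := by
      rw [hw_def, vnorm_elim_smul hu, hpw_eq]
      congr 1
      simp only [norm_mul, norm_pow, Complex.norm_real, Real.norm_eq_abs, _root_.abs_of_nonneg hwm,
        _root_.abs_of_nonneg hwc, _root_.abs_of_nonneg hwk]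
      ring
    calc sigmaMin (Ppoly M C K lam) ≤ vnorm (Ppoly M C K lam *ᵥ u) := sigmaMin_le _ hu
      _ = vnorm ((Matrix.fromCols DM (Matrix.fromCols DC DK)) *ᵥ w) := by
          rw [h1, vnorm_neg, hBw]
      _ ≤ specNorm (Matrix.fromCols DM (Matrix.fromCols DC DK)) * vnorm w :=
          le_specNorm _ _
      _ ≤ ε * vnorm w := mul_le_mul_of_nonneg_right hB (vnorm_nonneg _)
      _ = ε * pw wm wc wk (‖lam‖) := by rw [hwnorm]
  · -- singular value bound ⟹ perturbation
    intro hσ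
    obtain ⟨v, hv, hmin⟩ := sigmaMin_exists (Ppoly M C K lam)
    have hv0 : v ≠ 0 := fun h => by simp [h, vnorm_zero] at hv
    set u : Fin n → ℂ := Ppoly M C K lam *ᵥ v with hu_def
    by_cases hpp : wm ^ 2 * ‖lam‖ ^ 4 + wc ^ 2 * ‖lam‖ ^ 2 + wk ^ 2 = 0
    · -- degenerate case : p_w = 0
      have hp0 : pw wm wc wk ‖lam‖ = 0 := by
        rw [hpw_eq, hpp, Real.sqrt_zero]
      have hσ0 : sigmaMin (Ppoly M C K lam) = 0 := by
        refine le_antisymm ?_ ?_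
        · rw [hp0, mul_zero] at hσ; exact hσ
        · rw [← hmin]; exact vnorm_nonneg _
      have hPu : u = 0 := vnorm_eq_zero (hmin.trans hσ0)
      refine ⟨0, 0, 0, ?_, ?_⟩
      · have hzero : Matrix.fromCols (0 : Matrix (Fin n) (Fin n) ℂ)
            (Matrix.fromCols (0 : Matrix (Fin n) (Fin n) ℂ) (0 : Matrix (Fin n) (Fin n) ℂ))
            = 0 := by
          ext i j
          rcases j with j | j
          · simp
          · rcases j with j | j <;> simp
        rw [hzero]
        refine specNorm_le _ hε.le fun w _ => ?_
        rw [Matrix.zero_mulVec, vnorm_zero]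
        exact hε.le
      · simp only [smul_zero, add_zero]
        exact Matrix.exists_mulVec_eq_zero_iff.mp ⟨v, hv0, hPu⟩
    · -- nondegenerate case
      set pp : ℝ := wm ^ 2 * ‖lam‖ ^ 4 + wc ^ 2 * ‖lam‖ ^ 2 + wk ^ 2 with hpp_def
      have hpp_pos : 0 < pp := lt_of_le_of_ne hpp0 (Ne.symm hpp)
      have hppC : (pp : ℂ) ≠ 0 := Complex.ofReal_ne_zero.mpr (ne_of_gt hpp_pos)
      set cM : ℂ := -((wm:ℂ) * (starRingEnd ℂ lam)^2) / (pp:ℂ) with hcM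
      set cC : ℂ := -((wc:ℂ) * (starRingEnd ℂ lam)) / (pp:ℂ) with hcC
      set cK : ℂ := -(wk:ℂ) / (pp:ℂ) with hcK
      have hx : lam * (starRingEnd ℂ) lam = ((‖lam‖ : ℝ) : ℂ)^2 := by
        rw [Complex.mul_conj]; norm_cast; exact (Complex.sq_norm lam).symm
      have hnum : ((wm:ℂ)*lam^2) * (-((wm:ℂ) * (starRingEnd ℂ lam)^2))
          + ((wc:ℂ)*lam) * (-((wc:ℂ) * (starRingEnd ℂ lam))) + (wk:ℂ) * (-(wk:ℂ))
          = -((pp:ℝ):ℂ) := by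
        rw [hpp_def]
        push_cast
        linear_combination (-(wm:ℂ)^2*(lam * (starRingEnd ℂ) lam + ((‖lam‖ : ℝ):ℂ)^2)
          - (wc:ℂ)^2) * hx
      have key2 : ((wm:ℂ)*lam^2) * cM + ((wc:ℂ)*lam) * cC + (wk:ℂ) * cK = -1 := by
        have hstep : ((wm:ℂ)*lam^2) * cM + ((wc:ℂ)*lam) * cC + (wk:ℂ) * cK
            = (((wm:ℂ)*lam^2) * (-((wm:ℂ) * (starRingEnd ℂ lam)^2))
              + ((wc:ℂ)*lam) * (-((wc:ℂ) * (starRingEnd ℂ lam))) + (wk:ℂ) * (-(wk:ℂ))) / (pp:ℂ) := by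
          rw [hcM, hcC, hcK]; ring
        rw [hstep, hnum, neg_div, div_self hppC]
      have hvv : star v ⬝ᵥ v = (1:ℂ) := by
        have h1 := sum_abs_sq_eq_one hv
        calc star v ⬝ᵥ v = ∑ j, (starRingEnd ℂ) (v j) * v j := rfl
          _ = ∑ j, (((‖v j‖)^2 : ℝ) : ℂ) := by
              refine Finset.sum_congr rfl fun j _ => ?_
              rw [mul_comm, Complex.mul_conj]; norm_cast; exact (Complex.sq_norm _).symm
          _ = ((∑ j, (‖v j‖)^2 : ℝ) : ℂ) := by push_cast; rfl
          _ = 1 := by rw [h1]; norm_num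
      refine ⟨cM • Matrix.vecMulVec u (star v), cC • Matrix.vecMulVec u (star v),
        cK • Matrix.vecMulVec u (star v), ?_, ?_⟩
      · -- spectral norm bound
        set aa : (Fin n) ⊕ ((Fin n) ⊕ (Fin n)) → ℂ :=
          Sum.elim ((starRingEnd ℂ cM) • v)
            (Sum.elim ((starRingEnd ℂ cC) • v) ((starRingEnd ℂ cK) • v)) with haa_def
        have hBeq : Matrix.fromCols (cM • Matrix.vecMulVec u (star v))
            (Matrix.fromCols (cC • Matrix.vecMulVec u (star v))
              (cK • Matrix.vecMulVec u (star v)))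
            = Matrix.vecMulVec u (star aa) := by
          ext i j
          rcases j with j | j
          · simp only [Matrix.fromCols_apply_inl, Matrix.smul_apply, Matrix.vecMulVec_apply,
              haa_def, Pi.star_apply, Sum.elim_inl, Pi.smul_apply, smul_eq_mul, star_mul',
              Complex.conj_conj, RCLike.star_def]
            ring
          · rcases j with j | j
            · simp only [Matrix.fromCols_apply_inr, Matrix.fromCols_apply_inl,
                Matrix.smul_apply, Matrix.vecMulVec_apply, haa_def, Pi.star_apply, Sum.elim_inr,
                Sum.elim_inl, Pi.smul_apply, smul_eq_mul, star_mul', Complex.conj_conj,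
                RCLike.star_def]
              ring
            · simp only [Matrix.fromCols_apply_inr, Matrix.smul_apply, Matrix.vecMulVec_apply,
                haa_def, Pi.star_apply, Sum.elim_inr, Pi.smul_apply, smul_eq_mul, star_mul',
                Complex.conj_conj, RCLike.star_def]
              ring
        have haa_norm : vnorm aa = Real.sqrt (pp / pp^2) := by
          rw [haa_def, vnorm_elim_smul hv]
          congr 1
          rw [hcM, hcC, hcK]
          simp only [norm_div, norm_mul, norm_pow, norm_neg,
            RCLike.norm_conj, Complex.norm_real, Real.norm_eq_abs, _root_.abs_of_nonneg hwm,
            _root_.abs_of_nonneg hwc, _root_.abs_of_nonneg hwk, _root_.abs_of_pos hpp_pos]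
          rw [hpp_def]
          field_simp
        refine specNorm_le _ hε.le fun w hw => ?_
        rw [hBeq, vecMulVec_mulVec', vnorm_smul]
        have hσu : vnorm u = sigmaMin (Ppoly M C K lam) := hmin
        have step1 : ‖star aa ⬝ᵥ w‖ * vnorm u ≤ (vnorm aa * vnorm w) * vnorm u :=
          mul_le_mul_of_nonneg_right (abs_dotProduct_le aa w) (vnorm_nonneg u)
        have step2 : (vnorm aa * vnorm w) * vnorm u = vnorm aa * vnorm u := by
          rw [hw, mul_one]
        have hsqrt : Real.sqrt (pp / pp^2) = Real.sqrt pp / pp := by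
          rw [Real.sqrt_div hpp0, Real.sqrt_sq hpp_pos.le]
        calc ‖star aa ⬝ᵥ w‖ * vnorm u
            ≤ (vnorm aa * vnorm w) * vnorm u := step1
          _ = vnorm aa * vnorm u := step2
          _ ≤ (Real.sqrt pp / pp) * (ε * Real.sqrt pp) := by
              rw [haa_norm, hsqrt]
              refine mul_le_mul_of_nonneg_left ?_ (by positivity)
              rw [hσu]
              calc sigmaMin (Ppoly M C K lam) ≤ ε * pw wm wc wk (‖lam‖) := hσ
                _ = ε * Real.sqrt pp := by rw [hpw_eq]
          _ = ε * (Real.sqrt pp * Real.sqrt pp) / pp := by ring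
          _ = ε := by rw [Real.mul_self_sqrt hpp0, mul_div_assoc, div_self hpp_pos.ne', mul_one]
      · -- determinant vanishes
        have hmulv : (Ppoly M C K lam + ((wm:ℂ)*lam^2) • (cM • Matrix.vecMulVec u (star v))
            + ((wc:ℂ)*lam) • (cC • Matrix.vecMulVec u (star v))
            + (wk:ℂ) • (cK • Matrix.vecMulVec u (star v))) *ᵥ v = 0 := by
          simp only [Matrix.add_mulVec, Matrix.smul_mulVec, vecMulVec_mulVec', hvv, one_smul]
          rw [← hu_def]
          have hmod : u + ((wm:ℂ)*lam^2) • (cM • u) + ((wc:ℂ)*lam) • (cC • u)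
              + (wk:ℂ) • (cK • u)
              = ((1:ℂ) + (((wm:ℂ)*lam^2)*cM + ((wc:ℂ)*lam)*cC + (wk:ℂ)*cK)) • u := by
            module
          rw [hmod, key2]
          simp
        exact Matrix.exists_mulVec_eq_zero_iff.mp ⟨v, hv0, hmulv⟩
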